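/- Let θ, σ, φ, ψ be differentiable real-valued functions on a real interval satisfying the Einstein–Klein–Gordon evolution system, and define C(t) = σ(t)² + V(φ(t)) + ψ(t)²/2 − θ(t)²/3. Then C is differentiable and satisfies C'(t) = ((2/√3)σ(t) − (2/3)θ(t))·C(t) at every t. -/

import Mathlib

/-- For solutions of the Einstein–Klein–Gordon evolution system
(units `8πG = 1`)
  `θ' = −(1/3)θ² − 2σ² + V(φ) − ψ²`,
  `σ' = −θ²/(3√3) − θσ + σ²/√3 + (1/√3)(V(φ) + ψ²/2)`,
  `φ' = ψ`,  `ψ' = −θψ − V'(φ)`,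
the deviation from the Bianchi I constraint,
`C = σ² + V(φ) + ψ²/2 − θ²/3`, is differentiable and satisfies
`C' = ((2/√3)σ − (2/3)θ)·C`. -/
theorem constraint_deviation_evolution
    (V : ℝ → ℝ) (hV : Differentiable ℝ V)
    (θ σ φ ψ : ℝ → ℝ)
    (hθ : Differentiable ℝ θ) (hσ : Differentiable ℝ σ)
    (hφ : Differentiable ℝ φ) (hψ : Differentiable ℝ ψ)
    (eθ : ∀ t, deriv θ t = -(1 / 3) * θ t ^ 2 - 2 * σ t ^ 2 + V (φ t) - ψ t ^ 2)
    (eσ : ∀ t, deriv σ t = -θ t ^ 2 / (3 * Real.sqrt 3) - θ t * σ t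
        + σ t ^ 2 / Real.sqrt 3 + (1 / Real.sqrt 3) * (V (φ t) + ψ t ^ 2 / 2))
    (eφ : ∀ t, deriv φ t = ψ t)
    (eψ : ∀ t, deriv ψ t = -θ t * ψ t - deriv V (φ t))
    (C : ℝ → ℝ)
    (hC : ∀ t, C t = σ t ^ 2 + V (φ t) + ψ t ^ 2 / 2 - θ t ^ 2 / 3) :
    Differentiable ℝ C ∧
      ∀ t, deriv C t = ((2 / Real.sqrt 3) * σ t - (2 / 3) * θ t) * C t := by
  have hCfun : C = fun t => σ t ^ 2 + V (φ t) + ψ t ^ 2 / 2 - θ t ^ 2 / 3 := funext hC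
  subst hCfun
  have key : ∀ t, HasDerivAt (fun t => σ t ^ 2 + V (φ t) + ψ t ^ 2 / 2 - θ t ^ 2 / 3)
      (((2 / Real.sqrt 3) * σ t - (2 / 3) * θ t) *
        (σ t ^ 2 + V (φ t) + ψ t ^ 2 / 2 - θ t ^ 2 / 3)) t := by
    intro t
    have hσt := (hσ t).hasDerivAt
    have hθt := (hθ t).hasDerivAt
    have hψt := (hψ t).hasDerivAt
    have hVt := ((hV (φ t)).hasDerivAt.comp t (hφ t).hasDerivAt)
    have h := (((hσt.pow 2).add hVt).add ((hψt.pow 2).div_const 2)).sub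
      ((hθt.pow 2).div_const 3)
    refine h.congr_deriv ?_
    rw [eθ t, eσ t, eφ t, eψ t]
    have h3 : Real.sqrt 3 ≠ 0 := by positivity
    field_simp
    ring
  constructor
  · exact fun t => (key t).differentiableAt
  · intro t
    rw [(key t).deriv]
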